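/- Let n ≥ 3 and let a_1,…,a_{n-1} be indeterminates (conventions a_0 = a_n = 0). Define in the field ℚ(a_1,…,a_{n-1}) the coefficients c_i = a_{n-i}/det(a_{i-1}, a_i; a_i, a_{i+1}) and d_i = a_i·a_{n-i}/[det(a_{i-1}, a_i; a_i, a_{i+1})·det(a_{i-1}, a_{n-i}; a_i, a_{n-i+1})·det(a_i, a_{n-i}; a_{i+1}, a_{n-i+1})] for i ≠ ⌈n/2⌉, and d_{⌈n/2⌉} := 0. Then in ℚ(a_1,…,a_{n-1})[α_1,…,α_n,λ_1,…,λ_{n-1}] the identity holds: Σ_{i=1}^{n} α_i·α_{n+1-i} − Σ_{i=1}^{n-1} a_{n-i}·λ_i = −Σ_{i=1}^{n-1} c_i·det3(a_{i-1}, a_i, α_i; a_i, a_{i+1}, α_{i+1}; α_i, α_{i+1}, λ_i) − Σ_{i=1}^{n-1} d_i·det3(a_{i-1}, a_i, a_{n-i}; a_i, a_{i+1}, a_{n-i+1}; α_i, α_{i+1}, α_{n-i+1})^2, where det3 denotes the 3×3 determinant with the three listed rows. -/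

import Mathlib

/-- Auxiliary "boundary" function for the telescoping/reflection argument:
`s5hh a al n i` is the rational function `-(a_{i-1} α_{n-i+1} - a_{n-i} α_i)
(a_i α_{n-i+1} - a_{n-i+1} α_i) / (a_{i-1} a_{n-i+1} - a_i a_{n-i})`. -/
noncomputable def s5hh {F : Type*} [Field F] (a al : ℕ → F) (n i : ℕ) : F :=
  -((a (i - 1) * al (n - i + 1) - a (n - i) * al i) *
      (a i * al (n - i + 1) - a (n - i + 1) * al i)) /
    (a (i - 1) * a (n - i + 1) - a (n - i) * a i)

/-- Auxiliary "cross" function, antisymmetric under `i ↦ n - i`. -/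
noncomputable def s5cc {F : Type*} [Field F] (a al : ℕ → F) (n i : ℕ) : F :=
  -((a (n - i) * al (i + 1) - a i * al (n - i + 1)) ^ 2) /
    (a i * a (n - i + 1) - a (n - i) * a (i + 1))

set_option maxHeartbeats 2000000 in
/-- Lemma 3.13 of the paper (`caso0_PnxPn`): the decomposition identity for the
self-intersection expression of an `n`-dimensional subvariety of ℙ^{n-1}×ℙ^{n-1}.
The `a i` play the role of indeterminates (conventions `a 0 = a n = 0`), which is
expressed by working over an arbitrary field and assuming the generic nonvanishing
of the determinant denominators; `d ⌈n/2⌉ := 0` and the corresponding square term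
vanishes. The identity holds for all values of the indeterminates `α`, `λ`. -/
theorem stmt_5 (F : Type*) [Field F] (n : ℕ) (hn : 3 ≤ n) (a : ℕ → F)
    (ha0 : a 0 = 0) (han : a n = 0)
    (hΔ : ∀ i, 1 ≤ i → i ≤ n - 1 → Matrix.det !![a (i - 1), a i; a i, a (i + 1)] ≠ 0)
    (hΔ' : ∀ i, 1 ≤ i → i ≤ n - 1 → i ≠ (n + 1) / 2 →
      Matrix.det !![a (i - 1), a (n - i); a i, a (n - i + 1)] ≠ 0)
    (hΔ'' : ∀ i, 1 ≤ i → i ≤ n - 1 → i ≠ (n + 1) / 2 →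
      Matrix.det !![a i, a (n - i); a (i + 1), a (n - i + 1)] ≠ 0) :
    ∀ α lam : ℕ → F,
      (∑ i ∈ Finset.Icc 1 n, α i * α (n + 1 - i)) -
          (∑ i ∈ Finset.Icc 1 (n - 1), a (n - i) * lam i) =
        -(∑ i ∈ Finset.Icc 1 (n - 1),
            (a (n - i) / Matrix.det !![a (i - 1), a i; a i, a (i + 1)]) *
              Matrix.det !![a (i - 1), a i, α i;
                            a i, a (i + 1), α (i + 1);
                            α i, α (i + 1), lam i])
        - ∑ i ∈ Finset.Icc 1 (n - 1),
            (if i = (n + 1) / 2 then 0 else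
              a i * a (n - i) /
                (Matrix.det !![a (i - 1), a i; a i, a (i + 1)] *
                  Matrix.det !![a (i - 1), a (n - i); a i, a (n - i + 1)] *
                  Matrix.det !![a i, a (n - i); a (i + 1), a (n - i + 1)])) *
              (Matrix.det !![a (i - 1), a i, a (n - i);
                             a i, a (i + 1), a (n - i + 1);
                             α i, α (i + 1), α (n - i + 1)]) ^ 2 := by
  intro al lam
  -- Step 1: the per-index decomposition
  have key2 :
      (∑ i ∈ Finset.Icc 1 (n - 1), a (n - i) * lam i) -
        (∑ i ∈ Finset.Icc 1 (n - 1),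
            (a (n - i) / Matrix.det !![a (i - 1), a i; a i, a (i + 1)]) *
              Matrix.det !![a (i - 1), a i, al i;
                            a i, a (i + 1), al (i + 1);
                            al i, al (i + 1), lam i]) -
        (∑ i ∈ Finset.Icc 1 (n - 1),
            (if i = (n + 1) / 2 then 0 else
              a i * a (n - i) /
                (Matrix.det !![a (i - 1), a i; a i, a (i + 1)] *
                  Matrix.det !![a (i - 1), a (n - i); a i, a (n - i + 1)] *
                  Matrix.det !![a i, a (n - i); a (i + 1), a (n - i + 1)])) *
              (Matrix.det !![a (i - 1), a i, a (n - i);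
                             a i, a (i + 1), a (n - i + 1);
                             al i, al (i + 1), al (n - i + 1)]) ^ 2) =
      ∑ i ∈ Finset.Icc 1 (n - 1),
        (al i * al (n + 1 - i) - s5hh a al n i + s5cc a al n i) := by
    rw [← Finset.sum_sub_distrib, ← Finset.sum_sub_distrib]
    refine Finset.sum_congr rfl ?_
    intro i hi
    rw [Finset.mem_Icc] at hi
    obtain ⟨hi1, hi2⟩ := hi
    have e1 : n + 1 - i = n - i + 1 := by omega
    rw [e1]
    by_cases hmid : i = (n + 1) / 2
    · rcases Nat.even_or_odd n with ⟨k, hk⟩ | ⟨k, hk⟩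
      · -- n even, middle index: n - i = i
        have e2 : n - i = i := by omega
        have hD := hΔ i hi1 hi2
        rw [Matrix.det_fin_two_of] at hD
        have hcc0 : s5cc a al n i = 0 := by
          unfold s5cc
          rw [e2]
          simp
        rw [if_pos hmid, hcc0]
        unfold s5hh
        simp only [Matrix.det_fin_two_of, Matrix.det_fin_three, Matrix.cons_val',
          Matrix.cons_val_zero, Matrix.cons_val_one, Matrix.head_cons, Matrix.empty_val',
          Matrix.cons_val_fin_one, Matrix.head_fin_const, Matrix.cons_val_two, Matrix.tail_cons, Matrix.of_apply]
        rw [e2]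
        have hD2 : a (i - 1) * a (i + 1) - a i ^ 2 ≠ 0 := by rwa [sq]
        field_simp [hD, hD2]
        ring
      · -- n odd, middle index: n - i = i - 1
        have e3 : n - i + 1 = i := by omega
        have e2 : n - i = i - 1 := by omega
        have hD := hΔ i hi1 hi2
        rw [Matrix.det_fin_two_of] at hD
        have hh0 : s5hh a al n i = 0 := by
          unfold s5hh
          rw [e3, e2]
          simp
        rw [if_pos hmid, hh0]
        unfold s5cc
        simp only [Matrix.det_fin_two_of, Matrix.det_fin_three, Matrix.cons_val',
          Matrix.cons_val_zero, Matrix.cons_val_one, Matrix.head_cons, Matrix.empty_val',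
          Matrix.cons_val_fin_one, Matrix.head_fin_const, Matrix.cons_val_two, Matrix.tail_cons, Matrix.of_apply]
        rw [e3, e2]
        have hCd : a i * a i - a (i - 1) * a (i + 1) ≠ 0 := fun hcd => hD (by linear_combination -hcd)
        have hD2 : a (i - 1) * a (i + 1) - a i ^ 2 ≠ 0 := by rwa [sq]
        have hCd2 : a i ^ 2 - a (i - 1) * a (i + 1) ≠ 0 := by rwa [sq]
        field_simp [hD, hCd, hD2, hCd2]
        ring
    · -- generic index
      have hD := hΔ i hi1 hi2
      have hA := hΔ' i hi1 hi2 hmid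
      have hB := hΔ'' i hi1 hi2 hmid
      rw [Matrix.det_fin_two_of] at hD hA hB
      rw [if_neg hmid]
      unfold s5hh s5cc
      simp only [Matrix.det_fin_two_of, Matrix.det_fin_three, Matrix.cons_val',
        Matrix.cons_val_zero, Matrix.cons_val_one, Matrix.head_cons, Matrix.empty_val',
        Matrix.cons_val_fin_one, Matrix.head_fin_const, Matrix.cons_val_two, Matrix.tail_cons, Matrix.of_apply]
      have hD2 : a (i - 1) * a (i + 1) - a i ^ 2 ≠ 0 := by rwa [sq]
      field_simp [hD, hA, hB, hD2]
      ring
  -- Step 2: sum of the cross terms vanishes by the reflection i ↦ n - i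
  have hcc : (∑ i ∈ Finset.Icc 1 (n - 1), s5cc a al n i) = 0 := by
    refine Finset.sum_involution (fun i _ => n - i) ?_ ?_ ?_ ?_
    · intro i hi
      rw [Finset.mem_Icc] at hi
      show s5cc a al n i + s5cc a al n (n - i) = 0
      unfold s5cc
      have e2 : n - (n - i) + 1 = i + 1 := by omega
      have e1 : n - (n - i) = i := by omega
      rw [e2, e1]
      have e4 : a (n - i) * a (i + 1) - a i * a (n - i + 1) =
          -(a i * a (n - i + 1) - a (n - i) * a (i + 1)) := by ring
      have e5 : (a i * al (n - i + 1) - a (n - i) * al (i + 1)) ^ 2 =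
          (a (n - i) * al (i + 1) - a i * al (n - i + 1)) ^ 2 := by ring
      rw [e4, e5, div_neg]
      ring
    · intro i hi hne heq
      apply hne
      have heq' : n - i = i := heq
      unfold s5cc
      rw [heq']
      simp
    · intro i hi
      rw [Finset.mem_Icc] at hi
      show n - i ∈ Finset.Icc 1 (n - 1)
      rw [Finset.mem_Icc]
      omega
    · intro i hi
      rw [Finset.mem_Icc] at hi
      show n - (n - i) = i
      omega
  -- Step 3: sum of the boundary terms
  have hsplit : Finset.Icc 1 (n - 1) = insert 1 (Finset.Icc 2 (n - 1)) := by
    ext j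
    simp only [Finset.mem_Icc, Finset.mem_insert]
    omega
  have hh1 : s5hh a al n 1 = -(al 1 * al n) := by
    have h1' := hΔ' 1 (le_refl 1) (by omega) (by omega)
    rw [Matrix.det_fin_two_of] at h1'
    have e2 : n - 1 + 1 = n := by omega
    rw [e2, ha0] at h1'
    have h1'' : a (n - 1) * a 1 ≠ 0 := by
      intro hz
      exact h1' (by rw [hz]; ring)
    unfold s5hh
    rw [show (1 : ℕ) - 1 = 0 from rfl, e2, ha0, han]
    have hden : (0 : F) * 0 - a (n - 1) * a 1 ≠ 0 := by
      intro h
      exact h1'' (by linear_combination -h)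
    rw [div_eq_iff hden]
    ring
  have hhrest : (∑ i ∈ Finset.Icc 2 (n - 1), s5hh a al n i) = 0 := by
    refine Finset.sum_involution (fun j _ => n + 1 - j) ?_ ?_ ?_ ?_
    · intro j hj
      rw [Finset.mem_Icc] at hj
      show s5hh a al n j + s5hh a al n (n + 1 - j) = 0
      unfold s5hh
      have e2 : n - (n + 1 - j) + 1 = j := by omega
      have e3 : n - (n + 1 - j) = j - 1 := by omega
      have e1 : n + 1 - j - 1 = n - j := by omega
      have e0 : n + 1 - j = n - j + 1 := by omega
      rw [e2, e3, e1, e0]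
      have e4 : a (n - j) * a j - a (j - 1) * a (n - j + 1) =
          -(a (j - 1) * a (n - j + 1) - a (n - j) * a j) := by ring
      have e5 : (a (n - j) * al j - a (j - 1) * al (n - j + 1)) *
            (a (n - j + 1) * al j - a j * al (n - j + 1)) =
          (a (j - 1) * al (n - j + 1) - a (n - j) * al j) *
            (a j * al (n - j + 1) - a (n - j + 1) * al j) := by ring
      rw [e4, e5, div_neg]
      ring
    · intro j hj hne heq
      apply hne
      have heq' : n + 1 - j = j := heq
      have hj' := Finset.mem_Icc.mp hj
      have e2 : n - j + 1 = j := by omega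
      have e3 : n - j = j - 1 := by omega
      unfold s5hh
      rw [e2, e3]
      simp
    · intro j hj
      rw [Finset.mem_Icc] at hj
      show n + 1 - j ∈ Finset.Icc 2 (n - 1)
      rw [Finset.mem_Icc]
      omega
    · intro j hj
      rw [Finset.mem_Icc] at hj
      show n + 1 - (n + 1 - j) = j
      omega
  have hhh : (∑ i ∈ Finset.Icc 1 (n - 1), s5hh a al n i) = -(al 1 * al n) := by
    rw [hsplit, Finset.sum_insert (by simp), hh1, hhrest, add_zero]
  -- Step 4: top term of the α-sum
  have htop : (∑ i ∈ Finset.Icc 1 n, al i * al (n + 1 - i)) =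
      (∑ i ∈ Finset.Icc 1 (n - 1), al i * al (n + 1 - i)) + al n * al 1 := by
    have hins : Finset.Icc 1 n = insert n (Finset.Icc 1 (n - 1)) := by
      ext j
      simp only [Finset.mem_Icc, Finset.mem_insert]
      omega
    have hnotmem : n ∉ Finset.Icc 1 (n - 1) := by
      rw [Finset.mem_Icc]
      omega
    rw [hins, Finset.sum_insert hnotmem, show n + 1 - n = 1 from by omega]
    ring
  -- Step 5: expand the RHS sum of key2
  have key3 : (∑ i ∈ Finset.Icc 1 (n - 1),
        (al i * al (n + 1 - i) - s5hh a al n i + s5cc a al n i)) =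
      (∑ i ∈ Finset.Icc 1 (n - 1), al i * al (n + 1 - i)) -
        (∑ i ∈ Finset.Icc 1 (n - 1), s5hh a al n i) +
        (∑ i ∈ Finset.Icc 1 (n - 1), s5cc a al n i) := by
    rw [Finset.sum_add_distrib, Finset.sum_sub_distrib]
  -- Conclusion
  linear_combination -key2 - key3 + htop + hhh - hcc
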